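/- For every σ ≥ 0 and every ε with 0 < ε < 1, the ratio [∫_ℝ (ε f(x₁) − Λ)₋^{σ+3/2} dx₁] / [∫_ℝ (ε θ'(x₁)² − Λ)₋^{σ+3/2} dx₁] tends to 1 as Λ → +∞. (Proposition 4.1 of the paper: the right-hand side of the main Berezin-type bound has the asymptotics (1+o(1)) · (L_σ/(1−ε)^{3/2}) |ω| ∫_ℝ (ε θ'(x₁)² − Λ)₋^{σ+3/2} dx₁ as Λ → ∞.) -/

import Mathlib

open Real Set Filter MeasureTheory

set_option maxHeartbeats 1000000

lemma aux_right (θ θ' : ℝ → ℝ)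
    (hθ : ∀ x, HasDerivAt θ (θ' x) x) (hθ'c : Continuous θ')
    (hmono : Monotone θ')
    (hpos : ∀ x, 0 ≤ x → 0 ≤ θ' x)
    (θinvp : ℝ → ℝ)
    (hinvp : ∀ α, θ 0 ≤ α →
      0 ≤ θinvp α ∧ θ (θinvp α) = α ∧ ∀ z, 0 ≤ z → θ z = α → θinvp α ≤ z)
    (f : ℝ → ℝ)
    (hf₁ : ∀ x, θinvp (θ 0 + 2 * π) ≤ x → f x = (θ' (θinvp (θ x - π))) ^ 2) :
    0 < θinvp (θ 0 + 2 * π) ∧ 0 ≤ θinvp (θ 0 + π) ∧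
    (∀ x, θinvp (θ 0 + 2 * π) ≤ x →
      (θ' (θinvp (θ 0 + π) + (x - θinvp (θ 0 + 2 * π)))) ^ 2 ≤ f x ∧ f x ≤ (θ' x) ^ 2) ∧
    MonotoneOn f (Ici (θinvp (θ 0 + 2 * π))) := by
  have hπ := Real.pi_pos
  set x₀ := θinvp (θ 0 + 2 * π) with hx₀def
  set y₀ := θinvp (θ 0 + π) with hy₀def
  have hint : ∀ a b : ℝ, IntervalIntegrable θ' volume a b := fun a b =>
    hθ'c.intervalIntegrable a b
  have hFTC : ∀ a b : ℝ, θ b - θ a = ∫ t in a..b, θ' t := fun a b =>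
    (intervalIntegral.integral_eq_sub_of_hasDerivAt (fun x _ => hθ x) (hint a b)).symm
  have hmono0 : ∀ a b : ℝ, 0 ≤ a → a ≤ b → θ a ≤ θ b := by
    intro a b ha hab
    have h := hFTC a b
    have hnn : 0 ≤ ∫ t in a..b, θ' t := by
      apply intervalIntegral.integral_nonneg hab
      intro u hu; exact hpos u (le_trans ha hu.1)
    linarith
  obtain ⟨hx₀0, hx₀θ, hx₀min⟩ := hinvp (θ 0 + 2 * π) (by linarith)
  obtain ⟨hy₀0, hy₀θ, hy₀min⟩ := hinvp (θ 0 + π) (by linarith)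
  have hinv_mono : ∀ α β, θ 0 ≤ α → α ≤ β → θinvp α ≤ θinvp β := by
    intro α β hα hαβ
    obtain ⟨ha0, haθ, hamin⟩ := hinvp α hα
    obtain ⟨hb0, hbθ, hbmin⟩ := hinvp β (le_trans hα hαβ)
    by_contra h
    push_neg at h
    have h1 : θ (θinvp β) ≤ θ (θinvp α) := hmono0 _ _ hb0 h.le
    rw [haθ, hbθ] at h1
    have : θinvp α ≤ θinvp β := hamin _ hb0 (by rw [hbθ]; linarith)
    linarith
  have hy₀x₀ : y₀ ≤ x₀ := hinv_mono _ _ (by linarith) (by linarith)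
  -- θ' x₀ > 0 and x₀ > 0
  have hprod : 2 * π ≤ θ' x₀ * x₀ := by
    have hI := hFTC 0 x₀
    rw [hx₀θ] at hI
    have hIle : (∫ t in (0:ℝ)..x₀, θ' t) ≤ ∫ _t in (0:ℝ)..x₀, θ' x₀ :=
      intervalIntegral.integral_mono_on hx₀0 (hint 0 x₀) intervalIntegrable_const
        (fun u hu => hmono hu.2)
    rw [intervalIntegral.integral_const] at hIle
    simp only [smul_eq_mul, sub_zero] at hIle
    nlinarith
  have hθ'x₀ : 0 < θ' x₀ := by nlinarith [hpos x₀ hx₀0]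
  have hx₀pos : 0 < x₀ := by nlinarith [hpos x₀ hx₀0]
  -- main per-point facts
  have hkey : ∀ x, x₀ ≤ x →
      θinvp (θ 0 + π) + (x - x₀) ≤ θinvp (θ x - π) ∧ θinvp (θ x - π) ≤ x ∧
      0 ≤ θinvp (θ x - π) := by
    intro x hx
    have hx0 : (0:ℝ) ≤ x := le_trans hx₀0 hx
    have hθx : θ 0 + 2 * π ≤ θ x := by
      have := hmono0 x₀ x hx₀0 hx; rw [hx₀θ] at this; linarith
    have hα : θ 0 ≤ θ x - π := by linarith
    obtain ⟨hy0', hyθ', hymin'⟩ := hinvp (θ x - π) hα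
    set y := θinvp (θ x - π) with hydef
    have hyy₀ : y₀ ≤ y := hinv_mono _ _ (by linarith) (by linarith)
    have hyx : y ≤ x := by
      by_contra h
      push_neg at h
      have := hmono0 x y hx0 h.le
      rw [hyθ'] at this
      linarith
    refine ⟨?_, hyx, hy0'⟩
    by_contra h
    push_neg at h
    -- h : y < y₀ + (x - x₀)
    have hEq : (∫ t in y₀..y, θ' t) = ∫ t in x₀..x, θ' t := by
      have e1 := hFTC y₀ y
      have e2 := hFTC x₀ x
      rw [hyθ', hy₀θ] at e1
      rw [hx₀θ] at e2
      linarith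
    set c := x₀ - y₀ with hcdef
    have hc0 : 0 ≤ c := by linarith
    have hshift : (∫ t in y₀..y, θ' t) ≤ ∫ t in y₀..y, θ' (t + c) := by
      have hcont : Continuous (fun t : ℝ => θ' (t + c)) := by fun_prop
      apply intervalIntegral.integral_mono_on hyy₀ (hint _ _) (hcont.intervalIntegrable _ _)
      intro u _hu
      exact hmono (le_add_of_nonneg_right hc0)
    have hcv : (∫ t in y₀..y, θ' (t + c)) = ∫ t in (y₀ + c)..(y + c), θ' t :=
      intervalIntegral.integral_comp_add_right θ' c
    have hyc : y + c ≤ x := by linarith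
    have hsplit : (∫ t in x₀..(y + c), θ' t) + (∫ t in (y + c)..x, θ' t)
        = ∫ t in x₀..x, θ' t :=
      intervalIntegral.integral_add_adjacent_intervals (hint _ _) (hint _ _)
    have htail : θ' x₀ * (x - (y + c)) ≤ ∫ t in (y + c)..x, θ' t := by
      have h1 : (∫ _t in (y + c)..x, θ' x₀) ≤ ∫ t in (y + c)..x, θ' t :=
        intervalIntegral.integral_mono_on hyc intervalIntegrable_const (hint _ _)
          (fun u hu => hmono (le_trans (by linarith) hu.1))
      rw [intervalIntegral.integral_const] at h1
      simpa [smul_eq_mul, mul_comm] using h1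
    have hy₀c : y₀ + c = x₀ := by linarith
    rw [hy₀c] at hcv
    nlinarith
  refine ⟨hx₀pos, hy₀0, ?_, ?_⟩
  · intro x hx
    obtain ⟨hexp, hyx, hy0'⟩ := hkey x hx
    have hfx := hf₁ x hx
    constructor
    · rw [hfx]
      have h1 : θ' (y₀ + (x - x₀)) ≤ θ' (θinvp (θ x - π)) := hmono hexp
      have h2 : 0 ≤ θ' (y₀ + (x - x₀)) := hpos _ (by linarith)
      exact pow_le_pow_left₀ h2 h1 2
    · rw [hfx]
      have h1 : θ' (θinvp (θ x - π)) ≤ θ' x := hmono hyx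
      have h2 : 0 ≤ θ' (θinvp (θ x - π)) := hpos _ hy0'
      exact pow_le_pow_left₀ h2 h1 2
  · intro a ha b hb hab
    obtain ⟨_, _, hya0⟩ := hkey a ha
    obtain ⟨_, _, _⟩ := hkey b hb
    rw [hf₁ a ha, hf₁ b hb]
    have hab' : θinvp (θ a - π) ≤ θinvp (θ b - π) := by
      apply hinv_mono
      · have := hmono0 x₀ a hx₀0 ha; rw [hx₀θ] at this; linarith
      · have := hmono0 a b (le_trans hx₀0 ha) hab; linarith
    exact pow_le_pow_left₀ (hpos _ hya0) (hmono hab') 2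

/-- Proposition 4.1: for every `σ ≥ 0` and `0 < ε < 1`, the ratio
`[∫_ℝ (ε f(x₁) − Λ)₋^{σ+3/2} dx₁] / [∫_ℝ (ε θ'(x₁)² − Λ)₋^{σ+3/2} dx₁]` tends to `1`
as `Λ → +∞`. Here `(z)₋ = max(−z,0)`. -/
theorem ratio_tendsto_one (θ θ' : ℝ → ℝ)
    (hθ : ∀ x, HasDerivAt θ (θ' x) x) (hθ'c : Continuous θ')
    (hmono : Monotone θ')
    (hpos : ∀ x, 0 ≤ x → 0 ≤ θ' x) (hneg : ∀ x, x ≤ 0 → θ' x ≤ 0)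
    (hinf : Tendsto (fun x => |θ' x|) (cocompact ℝ) atTop)
    (θinvp θinvm : ℝ → ℝ)
    (hinvp : ∀ α, θ 0 ≤ α →
      0 ≤ θinvp α ∧ θ (θinvp α) = α ∧ ∀ z, 0 ≤ z → θ z = α → θinvp α ≤ z)
    (hinvm : ∀ α, θ 0 ≤ α →
      θinvm α ≤ 0 ∧ θ (θinvm α) = α ∧ ∀ z, z ≤ 0 → θ z = α → z ≤ θinvm α)
    (f : ℝ → ℝ)
    (hf₁ : ∀ x, θinvp (θ 0 + 2 * π) ≤ x → f x = (θ' (θinvp (θ x - π))) ^ 2)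
    (hf₂ : ∀ x, x ≤ θinvm (θ 0 + 2 * π) → f x = (θ' (θinvm (θ x - π))) ^ 2)
    (hf₃ : ∀ x, θinvm (θ 0 + 2 * π) < x → x < θinvp (θ 0 + 2 * π) → f x = 0)
    (σ ε : ℝ) (hσ : 0 ≤ σ) (hε₀ : 0 < ε) (hε₁ : ε < 1) :
    Tendsto (fun Λ : ℝ =>
        (∫ x : ℝ, (max (-(ε * f x - Λ)) 0) ^ (σ + 3 / 2 : ℝ)) /
          ∫ x : ℝ, (max (-(ε * (θ' x) ^ 2 - Λ)) 0) ^ (σ + 3 / 2 : ℝ))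
      atTop (nhds 1) := by
  have hπ := Real.pi_pos
  set pc : ℝ := σ + 3 / 2 with hpc
  have hpc0 : (0:ℝ) < pc := by rw [hpc]; linarith
  -- right-side facts
  obtain ⟨hx₀pos, hy₀0, hRbound, hRmono⟩ :=
    aux_right θ θ' hθ hθ'c hmono hpos θinvp hinvp f hf₁
  -- left-side facts via reflection
  have hdN : ∀ x : ℝ, HasDerivAt (fun x => θ (-x)) (-θ' (-x)) x := by
    intro x
    have h := ((hθ (-x)).comp x (hasDerivAt_neg x))
    simp only [mul_neg, mul_one] at h
    exact h
  have hdcN : Continuous (fun x : ℝ => -θ' (-x)) := (hθ'c.comp continuous_neg).neg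
  have hmonoN : Monotone (fun x : ℝ => -θ' (-x)) :=
    fun a b hab => neg_le_neg (hmono (neg_le_neg hab))
  have hposN : ∀ x : ℝ, 0 ≤ x → 0 ≤ -θ' (-x) :=
    fun x hx => neg_nonneg.mpr (hneg (-x) (by linarith))
  have hinvpN : ∀ α, (fun x => θ (-x)) 0 ≤ α →
      0 ≤ -θinvm α ∧ (fun x => θ (-x)) (-θinvm α) = α ∧
        ∀ z, 0 ≤ z → (fun x => θ (-x)) z = α → -θinvm α ≤ z := by
    intro α hα
    simp only [neg_zero] at hα
    obtain ⟨h1, h2, h3⟩ := hinvm α hα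
    refine ⟨by linarith, by simpa using h2, fun z hz hzθ => ?_⟩
    have := h3 (-z) (by linarith) hzθ
    linarith
  have hfN : ∀ x : ℝ, -θinvm ((fun x => θ (-x)) 0 + 2 * π) ≤ x →
      (fun x => f (-x)) x = ((fun x => -θ' (-x)) (-θinvm ((fun x => θ (-x)) x - π))) ^ 2 := by
    intro x hx
    simp only [neg_zero] at hx ⊢
    rw [hf₂ (-x) (by linarith), neg_neg, neg_sq]
  obtain ⟨hxmpos, hym0, hLbound, hLmono⟩ :=
    aux_right (fun x => θ (-x)) (fun x => -θ' (-x)) hdN hdcN hmonoN hposN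
      (fun α => -θinvm α) hinvpN (fun x => f (-x)) hfN
  simp only [neg_zero] at hxmpos hym0 hLbound hLmono
  have hLbound' : ∀ x, x ≤ θinvm (θ 0 + 2 * π) →
      (θ' (θinvm (θ 0 + π) + (x - θinvm (θ 0 + 2 * π)))) ^ 2 ≤ f x ∧ f x ≤ (θ' x) ^ 2 := by
    intro x hx
    obtain ⟨h1, h2⟩ := hLbound (-x) (by linarith)
    rw [neg_neg] at h1 h2
    constructor
    · rw [neg_sq] at h1
      rw [show θinvm (θ 0 + π) + (x - θinvm (θ 0 + 2 * π)) =
        -(-θinvm (θ 0 + π) + (-x - -θinvm (θ 0 + 2 * π))) by ring]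
      exact h1
    · rw [neg_sq] at h2
      exact h2
  have hLmono' : Antitone (fun x => f (min x (θinvm (θ 0 + 2 * π)))) := by
    intro a b hab
    have h1 : min a (θinvm (θ 0 + 2 * π)) ≤ min b (θinvm (θ 0 + 2 * π)) :=
      min_le_min hab le_rfl
    have := hLmono (a := -(min b (θinvm (θ 0 + 2 * π)))) (b := -(min a (θinvm (θ 0 + 2 * π))))
      (by simp only [mem_Ici]; have := min_le_right b (θinvm (θ 0 + 2 * π)); linarith)
      (by simp only [mem_Ici]; have := min_le_right a (θinvm (θ 0 + 2 * π)); linarith)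
      (by linarith)
    simpa using this
  -- abbreviations
  set x₀ : ℝ := θinvp (θ 0 + 2 * π) with hx0d
  set xm : ℝ := θinvm (θ 0 + 2 * π) with hxmd
  set y₀ : ℝ := θinvp (θ 0 + π) with hy0d
  set ym : ℝ := θinvm (θ 0 + π) with hymd
  have hxm0 : xm < 0 := by linarith
  have hym0' : ym ≤ 0 := by linarith
  -- continuity & nonnegativity of denominator integrand
  have hg_cont : ∀ Λ : ℝ, Continuous fun x : ℝ => (max (-(ε * (θ' x) ^ 2 - Λ)) 0) ^ pc := by
    intro Λ
    apply Continuous.rpow_const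
    · fun_prop
    · intro x; exact Or.inr hpc0.le
  -- compact support of denominator integrand
  have hcc : Tendsto (fun x => |θ' x|) atTop atTop :=
    hinf.mono_left (by rw [cocompact_eq_atBot_atTop]; exact le_sup_right)
  have hcb : Tendsto (fun x => |θ' x|) atBot atTop :=
    hinf.mono_left (by rw [cocompact_eq_atBot_atTop]; exact le_sup_left)
  have hbig : ∀ Λ : ℝ, ∃ R : ℝ, 0 < R ∧ ∀ x : ℝ, R ≤ |x| → Λ ≤ ε * (θ' x) ^ 2 := by
    intro Λ
    set C : ℝ := Real.sqrt (max Λ 0 / ε) with hC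
    have hC0 : 0 ≤ C := Real.sqrt_nonneg _
    obtain ⟨R1, hR1⟩ := eventually_atTop.1 (hcc.eventually_ge_atTop C)
    obtain ⟨R2, hR2⟩ := eventually_atBot.1 (hcb.eventually_ge_atTop C)
    refine ⟨max 1 (max R1 (-R2)), lt_of_lt_of_le one_pos (le_max_left _ _), ?_⟩
    intro x hx
    have hCx : C ≤ |θ' x| := by
      rcases le_total 0 x with h | h
      · refine hR1 x ?_
        rw [abs_of_nonneg h] at hx
        calc R1 ≤ max R1 (-R2) := le_max_left _ _
          _ ≤ max 1 (max R1 (-R2)) := le_max_right _ _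
          _ ≤ x := hx
      · refine hR2 x ?_
        rw [abs_of_nonpos h] at hx
        have : -R2 ≤ -x := by
          calc -R2 ≤ max R1 (-R2) := le_max_right _ _
            _ ≤ max 1 (max R1 (-R2)) := le_max_right _ _
            _ ≤ -x := hx
        linarith
    have hC2 : C ^ 2 = max Λ 0 / ε := Real.sq_sqrt (by positivity)
    have h1 : C ^ 2 ≤ (θ' x) ^ 2 := by
      calc C ^ 2 ≤ |θ' x| ^ 2 := pow_le_pow_left₀ hC0 hCx 2
        _ = (θ' x) ^ 2 := sq_abs _
    have h2 : max Λ 0 ≤ ε * (θ' x) ^ 2 := by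
      calc max Λ 0 = ε * (max Λ 0 / ε) := by field_simp
        _ = ε * C ^ 2 := by rw [hC2]
        _ ≤ ε * (θ' x) ^ 2 := by nlinarith
    exact le_trans (le_max_left _ _) h2
  have hg_int : ∀ Λ : ℝ, Integrable fun x : ℝ => (max (-(ε * (θ' x) ^ 2 - Λ)) 0) ^ pc := by
    intro Λ
    obtain ⟨R, hR0, hR⟩ := hbig Λ
    apply (hg_cont Λ).integrable_of_hasCompactSupport
    apply HasCompactSupport.intro (isCompact_Icc (a := -R) (b := R))
    intro x hx
    have hxR : R ≤ |x| := by
      simp only [mem_Icc, not_and_or, not_le] at hx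
      rcases hx with h | h
      · rw [abs_of_nonpos (by linarith)]; linarith
      · rw [abs_of_nonneg (by linarith)]; linarith
    have hB := hR x hxR
    rw [max_eq_right (by linarith), Real.zero_rpow hpc0.ne']
  -- measurability of f
  have hRmono' : Monotone fun x => f (max x x₀) :=
    fun a b hab => hRmono (mem_Ici.mpr (le_max_right _ _)) (mem_Ici.mpr (le_max_right _ _)) (max_le_max hab le_rfl)
  have hf_meas : Measurable f := by
    have heq : f = fun x => (Ici x₀).indicator (fun x => f (max x x₀)) x
        + (Iic xm).indicator (fun x => f (min x xm)) x := by
      funext x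
      rcases le_or_gt x₀ x with h | h
      · rw [indicator_of_mem (mem_Ici.mpr h), indicator_of_notMem
          (by simp only [mem_Iic, not_le]; linarith), max_eq_left h, add_zero]
      · rcases le_or_gt x xm with h2 | h2
        · rw [indicator_of_notMem (by simp only [mem_Ici, not_le]; exact h),
            indicator_of_mem (mem_Iic.mpr h2), min_eq_left h2, zero_add]
        · rw [indicator_of_notMem (by simp only [mem_Ici, not_le]; exact h),
            indicator_of_notMem (by simp only [mem_Iic, not_le]; exact h2),
            hf₃ x h2 h, add_zero]
    rw [heq]
    exact (hRmono'.measurable.indicator measurableSet_Ici).add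
      (hLmono'.measurable.indicator measurableSet_Iic)
  have hrpow_cont : Continuous fun y : ℝ => y ^ pc :=
    continuous_iff_continuousAt.mpr fun y => Real.continuousAt_rpow_const y pc (Or.inr hpc0.le)
  have hfI_meas : ∀ Λ : ℝ, Measurable fun x : ℝ => (max (-(ε * f x - Λ)) 0) ^ pc := by
    intro Λ
    exact hrpow_cont.measurable.comp
      (((hf_meas.const_mul ε).sub_const Λ).neg.max measurable_const)
  -- pointwise bound f ≤ θ'²
  have hfψ : ∀ x : ℝ, f x ≤ (θ' x) ^ 2 := by
    intro x
    rcases le_or_gt x₀ x with h | h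
    · exact (hRbound x h).2
    · rcases le_or_gt x xm with h2 | h2
      · exact (hLbound' x h2).2
      · rw [hf₃ x h2 h]; positivity
  have hpt_low : ∀ Λ x : ℝ,
      (max (-(ε * (θ' x) ^ 2 - Λ)) 0) ^ pc ≤ (max (-(ε * f x - Λ)) 0) ^ pc := by
    intro Λ x
    apply Real.rpow_le_rpow (le_max_right _ _) _ hpc0.le
    apply max_le_max _ le_rfl
    nlinarith [hfψ x]
  -- upper bound for numerator
  have hub : ∀ Λ : ℝ, Integrable (fun x : ℝ => (max (-(ε * f x - Λ)) 0) ^ pc) ∧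
      (∫ x : ℝ, (max (-(ε * f x - Λ)) 0) ^ pc) ≤
        (∫ x : ℝ, (max (-(ε * (θ' x) ^ 2 - Λ)) 0) ^ pc) + (x₀ - xm) * (max Λ 0) ^ pc := by
    intro Λ
    set g : ℝ → ℝ := fun x => (max (-(ε * (θ' x) ^ 2 - Λ)) 0) ^ pc with hg
    have hg_nn : ∀ x, 0 ≤ g x := fun x => Real.rpow_nonneg (le_max_right _ _) _
    have hp1int : Integrable fun x : ℝ => g (x - (x₀ - y₀)) := (hg_int Λ).comp_sub_right _
    have hp2int : Integrable fun x : ℝ => g (x - (xm - ym)) := (hg_int Λ).comp_sub_right _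
    have hp1i : Integrable ((Ici x₀).indicator fun x => g (x - (x₀ - y₀))) :=
      hp1int.indicator measurableSet_Ici
    have hp2i : Integrable ((Iic xm).indicator fun x => g (x - (xm - ym))) :=
      hp2int.indicator measurableSet_Iic
    have hp3i : Integrable ((Ioo xm x₀).indicator fun _ => (max Λ 0) ^ pc) :=
      (integrableOn_const measure_Ioo_lt_top.ne).integrable_indicator measurableSet_Ioo
    have hSint : Integrable (fun x => (Ici x₀).indicator (fun x => g (x - (x₀ - y₀))) x
        + (Iic xm).indicator (fun x => g (x - (xm - ym))) x
        + (Ioo xm x₀).indicator (fun _ => (max Λ 0) ^ pc) x) := (hp1i.add hp2i).add hp3i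
    have hfS : ∀ x : ℝ, (max (-(ε * f x - Λ)) 0) ^ pc ≤
        (Ici x₀).indicator (fun x => g (x - (x₀ - y₀))) x
        + (Iic xm).indicator (fun x => g (x - (xm - ym))) x
        + (Ioo xm x₀).indicator (fun _ => (max Λ 0) ^ pc) x := by
      intro x
      rcases le_or_gt x₀ x with h | h
      · have hb := (hRbound x h).1
        have e : (Ici x₀).indicator (fun x => g (x - (x₀ - y₀))) x
            + (Iic xm).indicator (fun x => g (x - (xm - ym))) x
            + (Ioo xm x₀).indicator (fun _ => (max Λ 0) ^ pc) x = g (x - (x₀ - y₀)) := by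
          rw [indicator_of_mem (mem_Ici.mpr h), indicator_of_notMem
            (by simp only [mem_Iic, not_le]; linarith),
            indicator_of_notMem (by simp only [mem_Ioo, not_and, not_lt]; intro _; exact h)]
          ring
        rw [e, hg]
        apply Real.rpow_le_rpow (le_max_right _ _) _ hpc0.le
        apply max_le_max _ le_rfl
        rw [show x - (x₀ - y₀) = y₀ + (x - x₀) by ring]
        nlinarith [hb]
      · rcases le_or_gt x xm with h2 | h2
        · have hb := (hLbound' x h2).1
          have e : (Ici x₀).indicator (fun x => g (x - (x₀ - y₀))) x
              + (Iic xm).indicator (fun x => g (x - (xm - ym))) x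
              + (Ioo xm x₀).indicator (fun _ => (max Λ 0) ^ pc) x = g (x - (xm - ym)) := by
            rw [indicator_of_notMem (by simp only [mem_Ici, not_le]; exact h),
              indicator_of_mem (mem_Iic.mpr h2),
              indicator_of_notMem (by simp only [mem_Ioo, not_and, not_lt]; intro hc; linarith)]
            ring
          rw [e, hg]
          apply Real.rpow_le_rpow (le_max_right _ _) _ hpc0.le
          apply max_le_max _ le_rfl
          rw [show x - (xm - ym) = ym + (x - xm) by ring]
          nlinarith [hb]
        · have e : (Ici x₀).indicator (fun x => g (x - (x₀ - y₀))) x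
              + (Iic xm).indicator (fun x => g (x - (xm - ym))) x
              + (Ioo xm x₀).indicator (fun _ => (max Λ 0) ^ pc) x = (max Λ 0) ^ pc := by
            rw [indicator_of_notMem (by simp only [mem_Ici, not_le]; exact h),
              indicator_of_notMem (by simp only [mem_Iic, not_le]; exact h2),
              indicator_of_mem (mem_Ioo.mpr ⟨h2, h⟩)]
            ring
          rw [e, hf₃ x h2 h]
          apply Real.rpow_le_rpow (le_max_right _ _) _ hpc0.le
          apply max_le_max _ le_rfl
          nlinarith
    have hfIint : Integrable fun x : ℝ => (max (-(ε * f x - Λ)) 0) ^ pc := by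
      apply Integrable.mono' hSint ((hfI_meas Λ).aestronglyMeasurable)
      filter_upwards with x
      have hnn : (0:ℝ) ≤ (max (-(ε * f x - Λ)) 0) ^ pc :=
        Real.rpow_nonneg (le_max_right _ _) _
      rw [Real.norm_eq_abs, abs_of_nonneg hnn]
      exact hfS x
    refine ⟨hfIint, ?_⟩
    have h1 := integral_mono hfIint hSint hfS
    have hadd12 : Integrable fun x : ℝ => (Ici x₀).indicator (fun x => g (x - (x₀ - y₀))) x
        + (Iic xm).indicator (fun x => g (x - (xm - ym))) x := hp1i.add hp2i
    rw [integral_add hadd12 hp3i, integral_add hp1i hp2i] at h1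
    have hb1 : (∫ x : ℝ, (Ici x₀).indicator (fun x => g (x - (x₀ - y₀))) x) ≤
        ∫ x in Ici (0:ℝ), g x := by
      have hmono1 : ∀ x : ℝ, (Ici x₀).indicator (fun x => g (x - (x₀ - y₀))) x ≤
          (Ici (0:ℝ)).indicator g (x - (x₀ - y₀)) := by
        intro x
        rcases le_or_gt x₀ x with h | h
        · rw [indicator_of_mem (mem_Ici.mpr h), indicator_of_mem
            (show x - (x₀ - y₀) ∈ Ici (0:ℝ) by simp only [mem_Ici]; linarith)]
        · rw [indicator_of_notMem (by simp only [mem_Ici, not_le]; exact h)]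
          exact indicator_nonneg (fun y _ => hg_nn y) _
      have hint2 : Integrable fun x : ℝ => (Ici (0:ℝ)).indicator g (x - (x₀ - y₀)) :=
        ((hg_int Λ).indicator measurableSet_Ici).comp_sub_right _
      calc (∫ x : ℝ, (Ici x₀).indicator (fun x => g (x - (x₀ - y₀))) x)
          ≤ ∫ x : ℝ, (Ici (0:ℝ)).indicator g (x - (x₀ - y₀)) :=
            integral_mono hp1i hint2 hmono1
        _ = ∫ x : ℝ, (Ici (0:ℝ)).indicator g x := by
            exact integral_sub_right_eq_self ((Ici (0:ℝ)).indicator g) _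
        _ = ∫ x in Ici (0:ℝ), g x := integral_indicator measurableSet_Ici
    have hb2 : (∫ x : ℝ, (Iic xm).indicator (fun x => g (x - (xm - ym))) x) ≤
        ∫ x in Iic (0:ℝ), g x := by
      have hmono2 : ∀ x : ℝ, (Iic xm).indicator (fun x => g (x - (xm - ym))) x ≤
          (Iic (0:ℝ)).indicator g (x - (xm - ym)) := by
        intro x
        rcases le_or_gt x xm with h | h
        · rw [indicator_of_mem (mem_Iic.mpr h), indicator_of_mem
            (show x - (xm - ym) ∈ Iic (0:ℝ) by simp only [mem_Iic]; linarith)]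
        · rw [indicator_of_notMem (by simp only [mem_Iic, not_le]; exact h)]
          exact indicator_nonneg (fun y _ => hg_nn y) _
      have hint2 : Integrable fun x : ℝ => (Iic (0:ℝ)).indicator g (x - (xm - ym)) :=
        ((hg_int Λ).indicator measurableSet_Iic).comp_sub_right _
      calc (∫ x : ℝ, (Iic xm).indicator (fun x => g (x - (xm - ym))) x)
          ≤ ∫ x : ℝ, (Iic (0:ℝ)).indicator g (x - (xm - ym)) :=
            integral_mono hp2i hint2 hmono2
        _ = ∫ x : ℝ, (Iic (0:ℝ)).indicator g x := by
            exact integral_sub_right_eq_self ((Iic (0:ℝ)).indicator g) _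
        _ = ∫ x in Iic (0:ℝ), g x := integral_indicator measurableSet_Iic
    have hb3 : (∫ x : ℝ, (Ioo xm x₀).indicator (fun _ => (max Λ 0) ^ pc) x) =
        (x₀ - xm) * (max Λ 0) ^ pc := by
      rw [integral_indicator_const _ measurableSet_Ioo, Real.volume_real_Ioo_of_le (by linarith), smul_eq_mul]
    have hIic : (∫ x in Iic (0:ℝ), g x) = ∫ x in Iio (0:ℝ), g x :=
      (setIntegral_congr_set (f := g) (Iio_ae_eq_Iic (a := (0:ℝ)) (μ := volume))).symm
    have hcompl : (∫ x in Ici (0:ℝ), g x) + (∫ x in Iio (0:ℝ), g x) = ∫ x : ℝ, g x := by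
      have h := integral_add_compl (measurableSet_Ici (a := (0:ℝ))) (hg_int Λ)
      rwa [compl_Ici] at h
    linarith
  -- growth of the denominator
  have hgrow : Tendsto
      (fun Λ : ℝ => (∫ x : ℝ, (max (-(ε * (θ' x) ^ 2 - Λ)) 0) ^ pc) / Λ ^ pc)
      atTop atTop := by
    rw [tendsto_atTop]
    intro b
    have h2pc : (0:ℝ) < 2 ^ pc := Real.rpow_pos_of_pos two_pos _
    set T : ℝ := 2 ^ pc * max b 0 / 2 + 1 with hT
    have hT0 : 0 < T := by
      have hm : (0:ℝ) ≤ 2 ^ pc * max b 0 := mul_nonneg h2pc.le (le_max_right b 0)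
      rw [hT]; linarith
    obtain ⟨z, hzmem, hzmax⟩ := isCompact_Icc.exists_isMaxOn (s := Icc (-T) T)
      ⟨0, by simp only [mem_Icc]; constructor <;> linarith⟩
      ((continuous_pow 2).comp hθ'c).continuousOn
    set M : ℝ := (θ' z) ^ 2 with hM
    have hM0 : 0 ≤ M := sq_nonneg _
    filter_upwards [eventually_ge_atTop (max (2 * (ε * M)) 1)] with Λ hΛ
    have hΛ1 : 1 ≤ Λ := le_trans (le_max_right _ _) hΛ
    have hΛM : 2 * (ε * M) ≤ Λ := le_trans (le_max_left _ _) hΛ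
    have hpt : ∀ x : ℝ, (Icc (-T) T).indicator (fun _ => (Λ / 2) ^ pc) x ≤
        (max (-(ε * (θ' x) ^ 2 - Λ)) 0) ^ pc := by
      intro x
      rcases em (x ∈ Icc (-T) T) with h | h
      · rw [indicator_of_mem h]
        apply Real.rpow_le_rpow (by linarith) _ hpc0.le
        have hψM : (θ' x) ^ 2 ≤ M := hzmax h
        have hle : Λ / 2 ≤ -(ε * (θ' x) ^ 2 - Λ) := by nlinarith [hε₀.le]
        exact le_trans hle (le_max_left _ _)
      · rw [indicator_of_notMem h]
        exact Real.rpow_nonneg (le_max_right _ _) _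
    have hIc : Integrable ((Icc (-T) T).indicator fun _ : ℝ => (Λ / 2) ^ pc) :=
      (integrableOn_const measure_Icc_lt_top.ne).integrable_indicator measurableSet_Icc
    have hInt := integral_mono hIc (hg_int Λ) hpt
    rw [integral_indicator_const _ measurableSet_Icc, Real.volume_real_Icc_of_le (by linarith), smul_eq_mul] at hInt
    have hΛpos : (0:ℝ) < Λ := by linarith
    have hpow : (0:ℝ) < Λ ^ pc := Real.rpow_pos_of_pos hΛpos _
    have hdivp : (Λ / 2) ^ pc = Λ ^ pc / 2 ^ pc := Real.div_rpow hΛpos.le (by norm_num : (0:ℝ) ≤ 2) pc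
    rw [hdivp] at hInt
    show b ≤ (∫ x : ℝ, (max (-(ε * (θ' x) ^ 2 - Λ)) 0) ^ pc) / Λ ^ pc
    rw [le_div_iff₀ hpow]
    calc b * Λ ^ pc ≤ max b 0 * Λ ^ pc :=
          mul_le_mul_of_nonneg_right (le_max_left _ _) hpow.le
      _ ≤ ((T - -T) / 2 ^ pc) * Λ ^ pc := by
          apply mul_le_mul_of_nonneg_right _ hpow.le
          rw [show T - -T = 2 ^ pc * max b 0 + 2 by rw [hT]; ring, le_div_iff₀ h2pc]
          nlinarith [le_max_right b 0]
      _ = (T - -T) * (Λ ^ pc / 2 ^ pc) := by ring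
      _ ≤ _ := hInt
  -- conclusion
  have hzero : Tendsto
      (fun Λ : ℝ => Λ ^ pc / ∫ x : ℝ, (max (-(ε * (θ' x) ^ 2 - Λ)) 0) ^ pc)
      atTop (nhds 0) := by
    have h := hgrow.inv_tendsto_atTop
    have he : (fun Λ : ℝ => (∫ x : ℝ, (max (-(ε * (θ' x) ^ 2 - Λ)) 0) ^ pc) / Λ ^ pc)⁻¹
        = fun Λ : ℝ => Λ ^ pc / ∫ x : ℝ, (max (-(ε * (θ' x) ^ 2 - Λ)) 0) ^ pc := by
      funext Λ
      simp [Pi.inv_apply, inv_div]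
    rwa [he] at h
  have hDpos : ∀ᶠ Λ : ℝ in atTop,
      0 < ∫ x : ℝ, (max (-(ε * (θ' x) ^ 2 - Λ)) 0) ^ pc := by
    filter_upwards [hgrow.eventually_ge_atTop 1, eventually_gt_atTop (0:ℝ)] with Λ h1 h2
    have hpow : (0:ℝ) < Λ ^ pc := Real.rpow_pos_of_pos h2 _
    by_contra h
    push_neg at h
    have h3 : (∫ x : ℝ, (max (-(ε * (θ' x) ^ 2 - Λ)) 0) ^ pc) / Λ ^ pc ≤ 0 :=
      div_nonpos_iff.mpr (Or.inr ⟨h, hpow.le⟩)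
    linarith
  have hupper : Tendsto (fun Λ : ℝ =>
      1 + (x₀ - xm) * (Λ ^ pc / ∫ x : ℝ, (max (-(ε * (θ' x) ^ 2 - Λ)) 0) ^ pc))
      atTop (nhds 1) := by
    have h := (tendsto_const_nhds (x := (1:ℝ)) (f := atTop)).add (hzero.const_mul (x₀ - xm))
    simpa using h
  apply tendsto_of_tendsto_of_tendsto_of_le_of_le' tendsto_const_nhds hupper
  · filter_upwards [hDpos] with Λ hD
    show (1:ℝ) ≤ (∫ x : ℝ, (max (-(ε * f x - Λ)) 0) ^ pc) /
      ∫ x : ℝ, (max (-(ε * (θ' x) ^ 2 - Λ)) 0) ^ pc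
    exact (one_le_div hD).2 (integral_mono (hg_int Λ) (hub Λ).1 (fun x => hpt_low Λ x))
  · filter_upwards [hDpos, eventually_ge_atTop (0:ℝ)] with Λ hD hΛ0
    show (∫ x : ℝ, (max (-(ε * f x - Λ)) 0) ^ pc) /
        (∫ x : ℝ, (max (-(ε * (θ' x) ^ 2 - Λ)) 0) ^ pc) ≤
      1 + (x₀ - xm) * (Λ ^ pc / ∫ x : ℝ, (max (-(ε * (θ' x) ^ 2 - Λ)) 0) ^ pc)
    have h2 := (hub Λ).2
    rw [max_eq_left hΛ0] at h2
    have hDne : (∫ x : ℝ, (max (-(ε * (θ' x) ^ 2 - Λ)) 0) ^ pc) ≠ 0 := hD.ne'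
    have e : 1 + (x₀ - xm) * (Λ ^ pc / ∫ x : ℝ, (max (-(ε * (θ' x) ^ 2 - Λ)) 0) ^ pc) =
        ((∫ x : ℝ, (max (-(ε * (θ' x) ^ 2 - Λ)) 0) ^ pc) + (x₀ - xm) * Λ ^ pc) /
          ∫ x : ℝ, (max (-(ε * (θ' x) ^ 2 - Λ)) 0) ^ pc := by
      rw [add_div, div_self hDne, mul_div_assoc]
    rw [e]
    exact (div_le_div_iff_of_pos_right hD).mpr h2
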